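/- If (a_i) is a nonnegative decreasing sequence defined on an integer interval J, L is a positive integer, r ∈ ℕ, and I = {i ∈ J : i ≡ r (mod L)}, then (1/L)∑_{i∈J} a_i − sup_{i∈J} a_i ≤ ∑_{i∈I} a_i. -/

import Mathlib

/-- If `(a i)` is a nonnegative decreasing sequence on the integer
interval `J = Icc lo hi`, `L > 0`, `r ∈ ℕ`, and `I = {i ∈ J : i ≡ r (mod L)}`, then
`(1/L) ∑_{i∈J} a i − sup_{i∈J} a i ≤ ∑_{i∈I} a i`. -/
theorem stmt1 (L : ℕ) (hL : 0 < L) (r : ℕ) (lo hi : ℕ) (hle : lo ≤ hi) (a : ℕ → ℝ)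
    (hnn : ∀ i ∈ Finset.Icc lo hi, 0 ≤ a i)
    (hdec : ∀ i ∈ Finset.Icc lo hi, ∀ j ∈ Finset.Icc lo hi, i ≤ j → a j ≤ a i) :
    (1 / (L : ℝ)) * ∑ i ∈ Finset.Icc lo hi, a i -
        (Finset.Icc lo hi).sup' (Finset.nonempty_Icc.mpr hle) a ≤
      ∑ i ∈ (Finset.Icc lo hi).filter (fun i => i % L = r % L), a i := by
  obtain ⟨m, hlom, hmlt, hmr⟩ : ∃ m, lo ≤ m ∧ m < lo + L ∧ m % L = r % L := by
    refine ⟨lo + (r % L + L - lo % L) % L, Nat.le_add_right _ _, ?_, ?_⟩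
    · have := Nat.mod_lt (r % L + L - lo % L) hL; omega
    · have hbL : lo % L < L := Nat.mod_lt _ hL
      show Nat.ModEq L _ r
      calc lo + (r % L + L - lo % L) % L
          ≡ lo + (r % L + L - lo % L) [MOD L] := Nat.ModEq.add_left _ (Nat.mod_modEq _ _)
        _ ≡ lo % L + (r % L + L - lo % L) [MOD L] := ((Nat.mod_modEq lo L).symm).add_right _
        _ = r % L + L := by omega
        _ ≡ r % L [MOD L] := Nat.add_mod_right _ _
        _ ≡ r [MOD L] := Nat.mod_modEq r L
  set J := Finset.Icc lo hi with hJdef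
  set I := J.filter (fun i => i % L = r % L) with hIdef
  set M := J.sup' (Finset.nonempty_Icc.mpr hle) a with hMdef
  have hloJ : lo ∈ J := by simp [hJdef, hle]
  have hM0 : 0 ≤ M := le_trans (hnn lo hloJ) (Finset.le_sup' a hloJ)
  have hLpos : (0 : ℝ) < L := by exact_mod_cast hL
  -- split the sum
  have hsplit : ∑ i ∈ J, a i =
      ∑ i ∈ J.filter (fun j => j < m), a i + ∑ i ∈ J.filter (fun j => ¬ j < m), a i :=
    (Finset.sum_filter_add_sum_filter_not J _ a).symm
  -- small part
  have hsmall : ∑ i ∈ J.filter (fun j => j < m), a i ≤ (L : ℝ) * M := by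
    have hsub : J.filter (fun j => j < m) ⊆ Finset.Ico lo m := by
      intro j hj
      simp only [Finset.mem_filter, hJdef, Finset.mem_Icc, Finset.mem_Ico] at hj ⊢
      omega
    have hcard : (J.filter (fun j => j < m)).card ≤ L := by
      have := Finset.card_le_card hsub
      rw [Nat.card_Ico] at this
      omega
    calc ∑ i ∈ J.filter (fun j => j < m), a i
        ≤ (J.filter (fun j => j < m)).card • M :=
          Finset.sum_le_card_nsmul _ _ _ (fun j hj => Finset.le_sup' a (Finset.mem_of_mem_filter j hj))
      _ = ((J.filter (fun j => j < m)).card : ℝ) * M := nsmul_eq_mul _ _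
      _ ≤ (L : ℝ) * M := by
          apply mul_le_mul_of_nonneg_right _ hM0
          exact_mod_cast hcard
  -- big part
  have hbig : ∑ i ∈ J.filter (fun j => ¬ j < m), a i ≤ (L : ℝ) * ∑ i ∈ I, a i := by
    set S := J.filter (fun j => ¬ j < m) with hSdef
    set g : ℕ → ℕ := fun j => m + L * ((j - m) / L) with hgdef
    have hgprop : ∀ j, m ≤ j → g j ≤ j ∧ j < g j + L ∧ g j % L = r % L := by
      intro j hmj
      have h1 : L * ((j - m) / L) ≤ j - m := Nat.mul_div_le _ _
      have h3 := Nat.div_add_mod (j - m) L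
      have h2 : (j - m) % L < L := Nat.mod_lt _ hL
      refine ⟨by simp only [hgdef]; omega, by simp only [hgdef]; omega, ?_⟩
      show (m + L * ((j - m) / L)) % L = r % L
      rw [Nat.add_mul_mod_self_left, hmr]
    have hmemS : ∀ j ∈ S, lo ≤ j ∧ j ≤ hi ∧ m ≤ j := by
      intro j hj
      simp only [hSdef, Finset.mem_filter, hJdef, Finset.mem_Icc] at hj
      omega
    have hmaps : ∀ j ∈ S, g j ∈ I := by
      intro j hj
      obtain ⟨h1, h2, h3⟩ := hmemS j hj
      obtain ⟨g1, g2, g3⟩ := hgprop j h3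
      simp only [hIdef, Finset.mem_filter, hJdef, Finset.mem_Icc]
      exact ⟨⟨le_trans hlom (Nat.le_add_right _ _), le_trans g1 h2⟩, g3⟩
    rw [← Finset.sum_fiberwise_of_maps_to hmaps a, Finset.mul_sum]
    apply Finset.sum_le_sum
    intro i hiI
    have hiJ : i ∈ J := Finset.mem_of_mem_filter i hiI
    have hiIcc : lo ≤ i ∧ i ≤ hi := by
      simpa [hJdef, Finset.mem_Icc] using hiJ
    have hfsub : S.filter (fun j => g j = i) ⊆ Finset.Ico i (i + L) := by
      intro j hj
      rw [Finset.mem_filter] at hj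
      obtain ⟨hjS, hji⟩ := hj
      obtain ⟨h1, h2, h3⟩ := hmemS j hjS
      obtain ⟨g1, g2, _⟩ := hgprop j h3
      rw [Finset.mem_Ico]
      omega
    have hfcard : (S.filter (fun j => g j = i)).card ≤ L := by
      have := Finset.card_le_card hfsub
      rw [Nat.card_Ico] at this
      omega
    calc ∑ j ∈ S.filter (fun j => g j = i), a j
        ≤ (S.filter (fun j => g j = i)).card • a i := by
          apply Finset.sum_le_card_nsmul
          intro j hj
          rw [Finset.mem_filter] at hj
          obtain ⟨hjS, hji⟩ := hj
          obtain ⟨h1, h2, h3⟩ := hmemS j hjS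
          obtain ⟨g1, g2, _⟩ := hgprop j h3
          exact hdec i hiJ j (Finset.mem_of_mem_filter j hjS) (by omega)
      _ = ((S.filter (fun j => g j = i)).card : ℝ) * a i := nsmul_eq_mul _ _
      _ ≤ (L : ℝ) * a i := by
          apply mul_le_mul_of_nonneg_right _ (hnn i hiJ)
          exact_mod_cast hfcard
  have htotal : ∑ i ∈ J, a i ≤ (L : ℝ) * M + (L : ℝ) * ∑ i ∈ I, a i := by
    rw [hsplit]; linarith
  rw [sub_le_iff_le_add, one_div, inv_mul_le_iff₀ hLpos, mul_add]
  linarith
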